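/- Let X be a pure n-dimensional weighted simplicial complex, n > 1, with all links of dimension > 0 connected. Fix 0 ≤ k ≤ n-2 and κ ≥ λ > 0. If for every ordered k-simplex σ the nonzero spectrum of the upper 0-Laplacian Δ^+_{σ,0} on the link X_σ is contained in [λ, κ], then for every ordered (k-1)-simplex τ the nonzero spectrum of Δ^+_{τ,0} on X_τ is contained in [2 - 1/λ, 2 - 1/κ]. -/

import Mathlib

open Finset

open scoped Classical

/-- `X` is (the face set of) an abstract simplicial complex: downward closed. -/
def IsSC {V : Type*} [DecidableEq V] (X : Finset (Finset V)) : Prop :=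
  ∀ s ∈ X, ∀ t ⊆ s, t ∈ X

/-- `X` is pure `n`-dimensional: every face is contained in a face of cardinality `n+1`. -/
def IsPure {V : Type*} [DecidableEq V] (X : Finset (Finset V)) (n : ℕ) : Prop :=
  ∀ s ∈ X, ∃ t ∈ X, s ⊆ t ∧ t.card = n + 1

/-- A weight function on a pure `n`-dimensional complex `X`. -/
def IsWeight {V : Type*} [DecidableEq V] (X : Finset (Finset V)) (n : ℕ) (m : Finset V → ℝ) :
    Prop :=
  (∀ s ∈ X, 0 < m s) ∧
  ∀ s ∈ X, s.card ≤ n →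
    m s = ∑ t ∈ X.filter (fun t => s ⊆ t ∧ t.card = s.card + 1), m t

/-- An ordered simplex of `X` with `a` vertices (an ordered `(a-1)`-simplex, element of
`Σ(a-1)`): an injective tuple whose image is a face of `X`. -/
def OSimp {V : Type*} [Fintype V] [DecidableEq V] (X : Finset (Finset V)) {a : ℕ}
    (f : Fin a → V) : Prop :=
  Function.Injective f ∧ Finset.image f Finset.univ ∈ X

/-- A `(a-1)`-form: an antisymmetric real function on ordered tuples. -/
def IsForm {V : Type*} {a : ℕ} (φ : (Fin a → V) → ℝ) : Prop :=
  ∀ (f : Fin a → V) (π : Equiv.Perm (Fin a)),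
    φ (f ∘ π) = ((Equiv.Perm.sign π : ℤ) : ℝ) * φ f

/-- The weighted inner product `⟨φ,ψ⟩ = Σ_{f ∈ Σ(a-1)} (m(f)/a!) φ(f) ψ(f)` on
`(a-1)`-forms. -/
noncomputable def formIP {V : Type*} [Fintype V] [DecidableEq V] (X : Finset (Finset V))
    (m : Finset V → ℝ) {a : ℕ} (φ ψ : (Fin a → V) → ℝ) : ℝ :=
  ∑ f : Fin a → V,
    if OSimp X f then (m (Finset.image f Finset.univ) / (Nat.factorial a : ℝ)) * (φ f * ψ f)
    else 0

/-- The simplicial differential `d : C^{a-1} → C^a`. -/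
def dOp {V : Type*} {a : ℕ} (φ : (Fin a → V) → ℝ) : (Fin (a + 1) → V) → ℝ :=
  fun f => ∑ i : Fin (a + 1), (-1 : ℝ) ^ (i : ℕ) * φ (fun j => f (i.succAbove j))

/-- The codifferential `δ : C^a → C^{a-1}`, given by
`(δφ)(τ) = Σ_{v : vτ ∈ Σ(a)} (m(vτ)/m(τ)) φ(vτ)`. -/
noncomputable def deltaOp {V : Type*} [Fintype V] [DecidableEq V] (X : Finset (Finset V))
    (m : Finset V → ℝ) {a : ℕ} (φ : (Fin (a + 1) → V) → ℝ) : (Fin a → V) → ℝ :=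
  fun τ => ∑ v : V,
    if OSimp X (Fin.cons v τ : Fin (a + 1) → V) then
      (m (Finset.image (Fin.cons v τ : Fin (a + 1) → V) Finset.univ) /
        m (Finset.image τ Finset.univ)) * φ (Fin.cons v τ)
    else 0

/-- The vertices of the link of the face `τ`. -/
def linkVerts {V : Type*} [Fintype V] [DecidableEq V] (X : Finset (Finset V)) (τ : Finset V) :
    Finset V :=
  Finset.univ.filter (fun v => v ∉ τ ∧ insert v τ ∈ X)

/-- The upper `0`-Laplacian `Δ⁺_{τ,0}` of the link of the face `τ`, with the induced weight
`m_τ(σ) = m(τ ∪ σ)`:  `Δ⁺φ(u) = φ(u) - Σ_{v : {u,v} ∈ X_τ} (m_τ({u,v})/m_τ({u})) φ(v)`. -/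
noncomputable def linkLap {V : Type*} [Fintype V] [DecidableEq V] (X : Finset (Finset V))
    (m : Finset V → ℝ) (τ : Finset V) (φ : V → ℝ) : V → ℝ :=
  fun u => φ u -
    ∑ v ∈ Finset.univ.filter (fun v => v ∉ insert u τ ∧ insert v (insert u τ) ∈ X),
      (m (insert v (insert u τ)) / m (insert u τ)) * φ v

/-- `μ` is an eigenvalue of the upper `0`-Laplacian of the link of `τ`. -/
def linkEig {V : Type*} [Fintype V] [DecidableEq V] (X : Finset (Finset V)) (m : Finset V → ℝ)
    (τ : Finset V) (μ : ℝ) : Prop :=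
  ∃ φ : V → ℝ, (∀ v, v ∉ linkVerts X τ → φ v = 0) ∧ (∃ u ∈ linkVerts X τ, φ u ≠ 0) ∧
    ∀ u ∈ linkVerts X τ, linkLap X m τ φ u = μ * φ u

/-- The link of the face `τ` is a connected: any two of its vertices are joined by a path of
edges of the link. -/
def linkConn {V : Type*} [Fintype V] [DecidableEq V] (X : Finset (Finset V)) (τ : Finset V) :
    Prop :=
  ∀ u ∈ linkVerts X τ, ∀ v ∈ linkVerts X τ,
    Relation.ReflTransGen
      (fun a b => a ∈ linkVerts X τ ∧ b ∈ linkVerts X τ ∧ a ≠ b ∧ insert a (insert b τ) ∈ X)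
      u v

section Aux
variable {V : Type*} [Fintype V] [DecidableEq V] {X : Finset (Finset V)} {m : Finset V → ℝ}

lemma mem_linkVerts {σ : Finset V} {v : V} :
    v ∈ linkVerts X σ ↔ v ∉ σ ∧ insert v σ ∈ X := by
  simp [linkVerts]

lemma weight_vertex_sum {n : ℕ} (hm : IsWeight X n m) {s : Finset V} (hs : s ∈ X)
    (hcard : s.card ≤ n) :
    m s = ∑ v ∈ linkVerts X s, m (insert v s) := by
  rw [hm.2 s hs hcard]
  refine (Finset.sum_nbij (fun v => insert v s) ?_ ?_ ?_ ?_).symm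
  · intro v hv
    rw [mem_linkVerts] at hv
    simp only [mem_filter]
    exact ⟨hv.2, Finset.subset_insert _ _, Finset.card_insert_of_notMem hv.1⟩
  · intro v hv w hw h
    rw [mem_coe, mem_linkVerts] at hv hw
    simp only at h
    have : v ∈ insert w s := h ▸ Finset.mem_insert_self v s
    rcases Finset.mem_insert.mp this with h' | h'
    · exact h'
    · exact absurd h' hv.1
  · intro t ht
    simp only [coe_filter, Set.mem_setOf_eq] at ht
    obtain ⟨htX, hst, hcard'⟩ := ht
    have h1 : (t \ s).card = 1 := by
      rw [Finset.card_sdiff_of_subset hst, hcard']; omega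
    obtain ⟨v, hv⟩ := Finset.card_eq_one.mp h1
    have hvt : v ∈ t \ s := hv ▸ Finset.mem_singleton_self v
    have hvns : v ∉ s := (Finset.mem_sdiff.mp hvt).2
    have hins : insert v s = t := by
      apply Finset.eq_of_subset_of_card_le
      · exact Finset.insert_subset (Finset.mem_sdiff.mp hvt).1 hst
      · rw [hcard', Finset.card_insert_of_notMem hvns]
    refine ⟨v, ?_, hins⟩
    rw [mem_coe, mem_linkVerts]
    exact ⟨hvns, hins ▸ htX⟩
  · intro v _; rfl

lemma link_pair_symm (hSC : IsSC X) {σ : Finset V} {u v : V} (hu : u ∈ linkVerts X σ)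
    (hv : v ∈ linkVerts X (insert u σ)) :
    v ∈ linkVerts X σ ∧ u ∈ linkVerts X (insert v σ) := by
  rw [mem_linkVerts] at hu hv ⊢
  obtain ⟨hu1, hu2⟩ := hu
  obtain ⟨hv1, hv2⟩ := hv
  have hvu : v ≠ u := fun h => hv1 (h ▸ Finset.mem_insert_self v σ)
  have hvσ : v ∉ σ := fun h => hv1 (Finset.mem_insert_of_mem h)
  constructor
  · exact ⟨hvσ, hSC _ hv2 _ (by
      rw [Finset.insert_comm]; exact Finset.subset_insert _ _)⟩
  · rw [mem_linkVerts]
    refine ⟨?_, by rwa [Finset.insert_comm]⟩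
    simp only [Finset.mem_insert, not_or]
    exact ⟨fun h => hvu h.symm, hu1⟩

lemma sum_link_swap (hSC : IsSC X) (σ : Finset V) (F : V → V → ℝ) :
    ∑ u ∈ linkVerts X σ, ∑ v ∈ linkVerts X (insert u σ), F u v
      = ∑ u ∈ linkVerts X σ, ∑ v ∈ linkVerts X (insert u σ), F v u := by
  exact Finset.sum_comm' (fun x y =>
    ⟨fun ⟨hx, hy⟩ => ⟨(link_pair_symm hSC hx hy).2, (link_pair_symm hSC hx hy).1⟩,
     fun ⟨hx, hy⟩ => ⟨(link_pair_symm hSC hy hx).1, (link_pair_symm hSC hy hx).2⟩⟩)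


lemma linkLap_eq (σ : Finset V) (φ : V → ℝ) (u : V) :
    linkLap X m σ φ u = φ u - ∑ v ∈ linkVerts X (insert u σ),
      m (insert v (insert u σ)) / m (insert u σ) * φ v := rfl

lemma lap_expand {σ : Finset V} (φ : V → ℝ) {u : V} (hpos : 0 < m (insert u σ)) :
    m (insert u σ) * (linkLap X m σ φ u * φ u)
      = m (insert u σ) * (φ u * φ u) - ∑ v ∈ linkVerts X (insert u σ),
          m (insert v (insert u σ)) * (φ v * φ u) := by
  rw [linkLap_eq, sub_mul, mul_sub, Finset.sum_mul, Finset.mul_sum]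
  congr 1
  apply Finset.sum_congr rfl
  intro v _
  field_simp


lemma energy_identity (hSC : IsSC X) (σ : Finset V)
    (hpos : ∀ u ∈ linkVerts X σ, 0 < m (insert u σ))
    (haSum : ∀ u ∈ linkVerts X σ,
      m (insert u σ) = ∑ v ∈ linkVerts X (insert u σ), m (insert v (insert u σ)))
    (φ : V → ℝ) :
    2 * ∑ u ∈ linkVerts X σ, m (insert u σ) * (linkLap X m σ φ u * φ u)
      = ∑ u ∈ linkVerts X σ, ∑ v ∈ linkVerts X (insert u σ),
          m (insert v (insert u σ)) * (φ u - φ v) ^ 2 := by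
  have key : ∑ u ∈ linkVerts X σ, m (insert u σ) * (linkLap X m σ φ u * φ u)
      = ∑ u ∈ linkVerts X σ, ∑ v ∈ linkVerts X (insert u σ),
          m (insert v (insert u σ)) * (φ u * φ u - φ v * φ u) := by
    apply Finset.sum_congr rfl
    intro u hu
    rw [lap_expand φ (hpos u hu), haSum u hu, Finset.sum_mul, ← Finset.sum_sub_distrib]
    exact Finset.sum_congr rfl (fun v _ => by ring)
  have swap1 : ∑ u ∈ linkVerts X σ, ∑ v ∈ linkVerts X (insert u σ),
        m (insert v (insert u σ)) * (φ u * φ u - φ v * φ u)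
      = ∑ u ∈ linkVerts X σ, ∑ v ∈ linkVerts X (insert u σ),
          m (insert v (insert u σ)) * (φ v * φ v - φ u * φ v) := by
    rw [sum_link_swap hSC σ (fun u v => m (insert v (insert u σ)) * (φ u * φ u - φ v * φ u))]
    exact Finset.sum_congr rfl (fun u _ => Finset.sum_congr rfl (fun v _ => by
      rw [Finset.insert_comm]))
  rw [key, two_mul]
  nth_rewrite 2 [swap1]
  rw [← Finset.sum_add_distrib]
  apply Finset.sum_congr rfl
  intro u _
  rw [← Finset.sum_add_distrib]
  exact Finset.sum_congr rfl (fun v _ => by ring)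

lemma lap_zero_const (hSC : IsSC X) {σ : Finset V} (hconnσ : linkConn X σ)
    (hposX : ∀ s ∈ X, 0 < m s)
    (haSum : ∀ u ∈ linkVerts X σ,
      m (insert u σ) = ∑ v ∈ linkVerts X (insert u σ), m (insert v (insert u σ)))
    (φ : V → ℝ) (hlap : ∀ u ∈ linkVerts X σ, linkLap X m σ φ u = 0) :
    ∀ u ∈ linkVerts X σ, ∀ v ∈ linkVerts X σ, φ u = φ v := by
  have hpos : ∀ u ∈ linkVerts X σ, 0 < m (insert u σ) := fun u hu =>
    hposX _ (mem_linkVerts.mp hu).2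
  have hE : ∑ u ∈ linkVerts X σ, ∑ v ∈ linkVerts X (insert u σ),
      m (insert v (insert u σ)) * (φ u - φ v) ^ 2 = 0 := by
    rw [← energy_identity hSC σ hpos haSum φ]
    rw [Finset.sum_congr rfl (fun u hu => by rw [hlap u hu, zero_mul, mul_zero])]
    simp
  have hnn : ∀ u ∈ linkVerts X σ, ∀ v ∈ linkVerts X (insert u σ),
      0 ≤ m (insert v (insert u σ)) * (φ u - φ v) ^ 2 := fun u hu v hv =>
    mul_nonneg (le_of_lt (hposX _ (mem_linkVerts.mp hv).2)) (sq_nonneg _)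
  have hedge : ∀ u ∈ linkVerts X σ, ∀ v ∈ linkVerts X (insert u σ), φ u = φ v := by
    intro u hu v hv
    have h1 : ∀ u ∈ linkVerts X σ, (0:ℝ) ≤ ∑ v ∈ linkVerts X (insert u σ),
        m (insert v (insert u σ)) * (φ u - φ v) ^ 2 := fun u hu =>
      Finset.sum_nonneg (hnn u hu)
    have h2 := (Finset.sum_eq_zero_iff_of_nonneg h1).mp hE u hu
    have h3 := (Finset.sum_eq_zero_iff_of_nonneg (hnn u hu)).mp h2 v hv
    have hp := hposX (insert v (insert u σ)) (mem_linkVerts.mp hv).2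
    have h4 : (φ u - φ v) ^ 2 = 0 := by
      rcases mul_eq_zero.mp h3 with h | h
      · linarith
      · exact h
    have := pow_eq_zero_iff (n := 2) (by norm_num) |>.mp h4
    linarith
  intro u hu v hv
  have hRT := hconnσ u hu v hv
  clear hv
  induction hRT with
  | refl => rfl
  | @tail b c hab hbc ih =>
    obtain ⟨hb, hc, hbc', hX⟩ := hbc
    have hcmem : c ∈ linkVerts X (insert b σ) := by
      rw [mem_linkVerts]
      constructor
      · simp only [Finset.mem_insert, not_or]
        exact ⟨fun h => hbc' h.symm, (mem_linkVerts.mp hc).1⟩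
      · rwa [Finset.insert_comm]
    exact ih.trans (hedge b hb c hcmem)

lemma spectral_pair_bound {E : Type*} [NormedAddCommGroup E] [InnerProductSpace ℝ E]
    [FiniteDimensional ℝ E] (T : E →ₗ[ℝ] E) (hT : T.IsSymmetric) (lam kap : ℝ) (ψ : E)
    (h : ∀ (c : ℝ) (e : E), T e = c • e → inner ℝ e ψ ≠ (0:ℝ) → lam ≤ c ∧ c ≤ kap) :
    lam * (inner ℝ ψ ψ : ℝ) ≤ (inner ℝ (T ψ) ψ : ℝ) ∧
      (inner ℝ (T ψ) ψ : ℝ) ≤ kap * (inner ℝ ψ ψ : ℝ) := by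
  have hrank : Module.finrank ℝ E = Module.finrank ℝ E := rfl
  set B := hT.eigenvectorBasis hrank with hB
  set μ := hT.eigenvalues hrank with hμ
  have happ : ∀ i, T (B i) = μ i • B i := fun i => by
    exact hT.apply_eigenvectorBasis hrank i
  have h1 : (inner ℝ (T ψ) ψ : ℝ) = ∑ i, μ i * (inner ℝ (B i) ψ * inner ℝ (B i) ψ) := by
    rw [← B.sum_inner_mul_inner (T ψ) ψ]
    apply Finset.sum_congr rfl
    intro i _
    have : (inner ℝ (T ψ) (B i) : ℝ) = μ i * inner ℝ (B i) ψ := by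
      rw [hT ψ (B i), happ i, inner_smul_right]
      rw [real_inner_comm]
    rw [this]; ring
  have h2 : (inner ℝ ψ ψ : ℝ) = ∑ i, inner ℝ (B i) ψ * inner ℝ (B i) ψ := by
    rw [← B.sum_inner_mul_inner ψ ψ]
    apply Finset.sum_congr rfl
    intro i _
    rw [real_inner_comm ψ (B i)]
  constructor
  · rw [h1, h2, Finset.mul_sum]
    apply Finset.sum_le_sum
    intro i _
    by_cases hc : (inner ℝ (B i) ψ : ℝ) = 0
    · rw [hc]; ring_nf; exact le_refl _
    · have := (h (μ i) (B i) (happ i) hc).1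
      nlinarith [mul_self_nonneg (inner ℝ (B i) ψ : ℝ)]
  · rw [h1, h2, Finset.mul_sum]
    apply Finset.sum_le_sum
    intro i _
    by_cases hc : (inner ℝ (B i) ψ : ℝ) = 0
    · rw [hc]; ring_nf; exact le_refl _
    · have := (h (μ i) (B i) (happ i) hc).2
      nlinarith [mul_self_nonneg (inner ℝ (B i) ψ : ℝ)]


lemma euclid_inner (f g : EuclideanSpace ℝ V) : (inner ℝ f g : ℝ) = ∑ v, f v * g v := by
  simp [PiLp.inner_apply, RCLike.inner_apply, mul_comm]

lemma link_quad_bound (hSC : IsSC X) (hposX : ∀ s ∈ X, 0 < m s)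
    {σ : Finset V} (hconnσ : linkConn X σ)
    (haSum : ∀ u ∈ linkVerts X σ,
      m (insert u σ) = ∑ v ∈ linkVerts X (insert u σ), m (insert v (insert u σ)))
    (lam kap : ℝ)
    (hspecσ : ∀ μ : ℝ, μ ≠ 0 → linkEig X m σ μ → lam ≤ μ ∧ μ ≤ kap)
    (χ : V → ℝ) (hχ0 : ∀ v, v ∉ linkVerts X σ → χ v = 0)
    (hmean : ∑ v ∈ linkVerts X σ, m (insert v σ) * χ v = 0) :
    lam * ∑ v ∈ linkVerts X σ, m (insert v σ) * χ v ^ 2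
      ≤ ∑ v ∈ linkVerts X σ, m (insert v σ) * (linkLap X m σ χ v * χ v) ∧
    ∑ v ∈ linkVerts X σ, m (insert v σ) * (linkLap X m σ χ v * χ v)
      ≤ kap * ∑ v ∈ linkVerts X σ, m (insert v σ) * χ v ^ 2 := by
  set S := linkVerts X σ with hS
  set sa : V → ℝ := fun v => Real.sqrt (m (insert v σ)) with hsa
  have hapos : ∀ v ∈ S, 0 < m (insert v σ) := fun v hv => hposX _ (mem_linkVerts.mp hv).2
  have hsapos : ∀ v ∈ S, 0 < sa v := fun v hv => Real.sqrt_pos.mpr (hapos v hv)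
  have hsasq : ∀ v ∈ S, sa v * sa v = m (insert v σ) := fun v hv =>
    Real.mul_self_sqrt (le_of_lt (hapos v hv))
  set K : Matrix V V ℝ := fun v w =>
    if v ∈ S ∧ w ∈ linkVerts X (insert v σ) then
      m (insert w (insert v σ)) / (sa v * sa w) else 0 with hK
  set M : Matrix V V ℝ := fun v w => (if v = w ∧ v ∈ S then 1 else 0) - K v w with hM
  have hKsymm : ∀ v w, K v w = K w v := by
    intro v w
    rw [hK]
    simp only
    by_cases h : v ∈ S ∧ w ∈ linkVerts X (insert v σ)
    · have h' := link_pair_symm hSC h.1 h.2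
      rw [if_pos h, if_pos ⟨h'.1, h'.2⟩, Finset.insert_comm, mul_comm (sa v) (sa w)]
    · rw [if_neg h, if_neg ?_]
      intro h'
      have h'' := link_pair_symm hSC h'.1 h'.2
      exact h ⟨h''.1, h''.2⟩
  have hMherm : M.IsHermitian := by
    ext v w
    simp only [Matrix.conjTranspose_apply, star_trivial]
    simp only [hM]
    rw [hKsymm w v]
    congr 1
    by_cases h : v = w
    · subst h; rfl
    · rw [if_neg (fun hh => h hh.1.symm), if_neg (fun hh => h hh.1)]
  set T := Matrix.toEuclideanLin M with hT'
  have hTsymm : T.IsSymmetric := Matrix.isHermitian_iff_isSymmetric.mp hMherm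
  have hTapply : ∀ (f : EuclideanSpace ℝ V) (v : V), T f v = ∑ w, M v w * f w := by
    intro f v
    simp [hT', Matrix.toEuclideanLin, Matrix.toLin'_apply, Matrix.mulVec, dotProduct]
  have hTf : ∀ (f : EuclideanSpace ℝ V) (v : V), T f v =
      (if v ∈ S then f v else 0) - ∑ w ∈ linkVerts X (insert v σ), K v w * f w := by
    intro f v
    rw [hTapply]
    have expand : ∀ w, M v w * f w = (if w = v then (if v ∈ S then f w else 0) else 0)
        - K v w * f w := by
      intro w
      rw [hM]
      simp only
      rw [sub_mul]
      congr 1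
      by_cases h : v = w
      · subst h
        by_cases h2 : v ∈ S
        · rw [if_pos ⟨rfl, h2⟩, if_pos rfl, if_pos h2, one_mul]
        · rw [if_neg (fun hh => h2 hh.2), if_pos rfl, if_neg h2, zero_mul]
      · rw [if_neg (fun hh => h hh.1), if_neg (fun hh : w = v => h hh.symm), zero_mul]
    rw [Finset.sum_congr rfl (fun w _ => expand w), Finset.sum_sub_distrib]
    congr 1
    · rw [Finset.sum_ite_eq' Finset.univ v (fun w => if v ∈ S then f w else 0)]
      simp
    · exact (Finset.sum_subset (Finset.subset_univ _) (fun w _ hw => by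
        rw [hK]
        simp only
        rw [if_neg (fun hh => hw hh.2), zero_mul])).symm
  have hTlap : ∀ (f : EuclideanSpace ℝ V), ∀ v ∈ S,
      T f v = sa v * linkLap X m σ (fun w => f w / sa w) v := by
    intro f v hv
    rw [hTf, if_pos hv, linkLap_eq, mul_sub]
    have h1 : sa v ≠ 0 := ne_of_gt (hsapos v hv)
    congr 1
    · field_simp
    · rw [Finset.mul_sum]
      apply Finset.sum_congr rfl
      intro w hw
      have hwS : w ∈ S := (link_pair_symm hSC hv hw).1
      rw [hK]
      simp only
      rw [if_pos ⟨hv, hw⟩]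
      have h1 : sa v ≠ 0 := ne_of_gt (hsapos v hv)
      have h2 : sa w ≠ 0 := ne_of_gt (hsapos w hwS)
      rw [← hsasq v hv]
      field_simp
  have hToffS : ∀ (f : EuclideanSpace ℝ V) (v : V), v ∉ S → T f v = 0 := by
    intro f v hv
    rw [hTf, if_neg hv]
    simp only [zero_sub, neg_eq_zero]
    apply Finset.sum_eq_zero
    intro w _
    rw [hK]
    simp only
    rw [if_neg (fun hh => hv hh.1), zero_mul]
  set ψ : EuclideanSpace ℝ V := WithLp.toLp 2 (fun v => sa v * χ v : V → ℝ) with hψ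
  have hψv : ∀ v, ψ v = sa v * χ v := fun v => rfl
  have hψoff : ∀ v, v ∉ S → ψ v = 0 := fun v hv => by rw [hψv, hχ0 v hv, mul_zero]
  have hratio : (fun w => ψ w / sa w) = χ := by
    funext w
    by_cases hw : w ∈ S
    · rw [hψv]
      have h1 : sa w ≠ 0 := ne_of_gt (hsapos w hw)
      field_simp
    · rw [hψv, hχ0 w hw, mul_zero, zero_div]
  have hinner1 : (inner ℝ ψ ψ : ℝ) = ∑ v ∈ S, m (insert v σ) * χ v ^ 2 := by
    rw [euclid_inner]
    rw [← Finset.sum_subset (Finset.subset_univ S)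
      (fun v _ hv => by rw [hψoff v hv, mul_zero])]
    apply Finset.sum_congr rfl
    intro v hv
    rw [hψv, ← hsasq v hv]
    ring
  have hinner2 : (inner ℝ (T ψ) ψ : ℝ)
      = ∑ v ∈ S, m (insert v σ) * (linkLap X m σ χ v * χ v) := by
    rw [euclid_inner]
    rw [← Finset.sum_subset (Finset.subset_univ S)
      (fun v _ hv => by rw [hToffS ψ v hv, zero_mul])]
    apply Finset.sum_congr rfl
    intro v hv
    rw [hTlap ψ v hv, hratio, hψv, ← hsasq v hv]
    ring
  have hkey : ∀ (c : ℝ) (e : EuclideanSpace ℝ V), T e = c • e → inner ℝ e ψ ≠ (0:ℝ) →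
      lam ≤ c ∧ c ≤ kap := by
    intro c e heig hne
    have hip : (inner ℝ e ψ : ℝ) = ∑ v ∈ S, e v * ψ v := by
      rw [euclid_inner]
      exact (Finset.sum_subset (Finset.subset_univ S)
        (fun v _ hv => by rw [hψoff v hv, mul_zero])).symm
    by_cases hc : c = 0
    · exfalso
      subst hc
      have hT0 : ∀ v, T e v = 0 := fun v => by
        rw [heig]; simp
      have hlap0 : ∀ v ∈ S, linkLap X m σ (fun w => e w / sa w) v = 0 := by
        intro v hv
        have h1 := hTlap e v hv
        rw [hT0 v] at h1
        rcases mul_eq_zero.mp h1.symm with h | h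
        · exact absurd h (ne_of_gt (hsapos v hv))
        · exact h
      have hconst := lap_zero_const hSC hconnσ hposX haSum (fun w => e w / sa w) hlap0
      have hSne : S.Nonempty := by
        rcases Finset.eq_empty_or_nonempty S with h | h
        · exfalso; apply hne; rw [hip, h, Finset.sum_empty]
        · exact h
      obtain ⟨u₀, hu₀⟩ := hSne
      apply hne
      rw [hip]
      have hterm : ∀ v ∈ S, e v * ψ v = (e u₀ / sa u₀) * (m (insert v σ) * χ v) := by
        intro v hv
        have hsv : sa v ≠ 0 := ne_of_gt (hsapos v hv)
        have hev : e v = (e v / sa v) * sa v := by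
          field_simp
        rw [hψv]
        calc e v * (sa v * χ v) = (e v / sa v) * sa v * (sa v * χ v) := by rw [← hev]
          _ = (e u₀ / sa u₀) * sa v * (sa v * χ v) := by
                have hcv : e v / sa v = e u₀ / sa u₀ := hconst v hv u₀ hu₀
                rw [hcv]
          _ = (e u₀ / sa u₀) * (m (insert v σ) * χ v) := by rw [← hsasq v hv]; ring
      rw [Finset.sum_congr rfl hterm, ← Finset.mul_sum, hmean, mul_zero]
    · have heoff : ∀ v, v ∉ S → e v = 0 := by
        intro v hv
        have h1 := hToffS e v hv
        rw [heig] at h1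
        have h2 : c * e v = 0 := h1
        exact (mul_eq_zero.mp h2).resolve_left hc
      refine hspecσ c hc ⟨fun w => e w / sa w, ?_, ?_, ?_⟩
      · intro v hv
        show e v / sa v = 0
        rw [heoff v hv, zero_div]
      · have hex : ∃ v, e v * ψ v ≠ 0 := by
          by_contra h
          push_neg at h
          apply hne
          rw [euclid_inner]
          exact Finset.sum_eq_zero (fun v _ => h v)
        obtain ⟨v, hv⟩ := hex
        have hvS : v ∈ S := by
          by_contra h
          rw [hψoff v h, mul_zero] at hv
          exact hv rfl
        refine ⟨v, hvS, ?_⟩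
        exact div_ne_zero (fun h => hv (by rw [h, zero_mul])) (ne_of_gt (hsapos v hvS))
      · intro u hu
        have h1 := hTlap e u hu
        rw [heig] at h1
        have h2 : c * e u = sa u * linkLap X m σ (fun w => e w / sa w) u := h1
        have h4 : sa u ≠ 0 := ne_of_gt (hsapos u hu)
        have h5 : sa u * linkLap X m σ (fun w => e w / sa w) u
            = sa u * (c * (e u / sa u)) := by
          rw [← h2]
          field_simp [h4]
        exact mul_left_cancel₀ h4 h5
  have hfinal := spectral_pair_bound T hTsymm lam kap ψ hkey
  rw [hinner1, hinner2] at hfinal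
  exact hfinal


end Aux

/-- (Spectral descent in links.) Let `X` be a pure `n`-dimensional weighted
simplicial complex, `n > 1`, with all links of dimension `> 0` connected.  Fix
`0 ≤ k ≤ n - 2` and `κ ≥ λ > 0`.  If for every `k`-simplex `σ` (face with `σ.card = k+1`) the
nonzero spectrum of the upper `0`-Laplacian of the link `X_σ` is contained in `[λ, κ]`, then
for every `(k-1)`-simplex `τ` (face with `τ.card = k`) the nonzero spectrum of the upper
`0`-Laplacian of `X_τ` is contained in `[2 - 1/λ, 2 - 1/κ]`. -/
theorem stmt10 {V : Type*} [Fintype V] [DecidableEq V] (n : ℕ) (hn : 1 < n)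
    (X : Finset (Finset V)) (hSC : IsSC X) (hpure : IsPure X n)
    (hconn : ∀ s ∈ X, s.card + 1 ≤ n → linkConn X s)
    (m : Finset V → ℝ) (hm : IsWeight X n m)
    (k : ℕ) (hk : k + 2 ≤ n)
    (lam kap : ℝ) (hlam : 0 < lam) (hlk : lam ≤ kap)
    (hspec : ∀ σ ∈ X, σ.card = k + 1 →
      ∀ μ : ℝ, μ ≠ 0 → linkEig X m σ μ → lam ≤ μ ∧ μ ≤ kap) :
    ∀ τ ∈ X, τ.card = k →
      ∀ μ : ℝ, μ ≠ 0 → linkEig X m τ μ → 2 - 1 / lam ≤ μ ∧ μ ≤ 2 - 1 / kap := by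
  intro τ hτ hcard μ hμ heigen
  obtain ⟨φ, hφ0, ⟨u₀, hu₀, hφu₀⟩, heig⟩ := heigen
  have hkap : 0 < kap := lt_of_lt_of_le hlam hlk
  set L := linkVerts X τ with hL
  -- basic facts about vertices of the link of τ
  have hmemX : ∀ u ∈ L, insert u τ ∈ X := fun u hu => (mem_linkVerts.mp hu).2
  have hcard1 : ∀ u ∈ L, (insert u τ).card = k + 1 := fun u hu => by
    rw [Finset.card_insert_of_notMem (mem_linkVerts.mp hu).1, hcard]
  have hmemX2 : ∀ u ∈ L, ∀ v ∈ linkVerts X (insert u τ), insert v (insert u τ) ∈ X :=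
    fun u hu v hv => (mem_linkVerts.mp hv).2
  have hcard2 : ∀ u ∈ L, ∀ v ∈ linkVerts X (insert u τ),
      (insert v (insert u τ)).card = k + 2 := fun u hu v hv => by
    rw [Finset.card_insert_of_notMem (mem_linkVerts.mp hv).1, hcard1 u hu]
  have hpos1 : ∀ u ∈ L, 0 < m (insert u τ) := fun u hu => hm.1 _ (hmemX u hu)
  have hpos2 : ∀ u ∈ L, ∀ v ∈ linkVerts X (insert u τ), 0 < m (insert v (insert u τ)) :=
    fun u hu v hv => hm.1 _ (hmemX2 u hu v hv)
  -- weight recursions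
  have hLsum : ∀ u ∈ L, m (insert u τ)
      = ∑ v ∈ linkVerts X (insert u τ), m (insert v (insert u τ)) := fun u hu =>
    weight_vertex_sum hm (hmemX u hu) (by rw [hcard1 u hu]; omega)
  have hLsum2 : ∀ u ∈ L, ∀ v ∈ linkVerts X (insert u τ), m (insert v (insert u τ))
      = ∑ w ∈ linkVerts X (insert v (insert u τ)), m (insert w (insert v (insert u τ))) :=
    fun u hu v hv =>
    weight_vertex_sum hm (hmemX2 u hu v hv) (by rw [hcard2 u hu v hv]; omega)
  -- eigen equation in weighted form
  have heig' : ∀ u ∈ L, ∑ v ∈ linkVerts X (insert u τ), m (insert v (insert u τ)) * φ v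
      = (1 - μ) * (m (insert u τ) * φ u) := by
    intro u hu
    have h := heig u hu
    rw [linkLap_eq] at h
    have h2 : ∑ v ∈ linkVerts X (insert u τ),
        m (insert v (insert u τ)) / m (insert u τ) * φ v = (1 - μ) * φ u := by linarith
    have h3 : ∑ v ∈ linkVerts X (insert u τ), m (insert v (insert u τ)) * φ v
        = m (insert u τ) * ∑ v ∈ linkVerts X (insert u τ),
            m (insert v (insert u τ)) / m (insert u τ) * φ v := by
      rw [Finset.mul_sum]
      apply Finset.sum_congr rfl
      intro v _
      have hne := ne_of_gt (hpos1 u hu)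
      field_simp
    rw [h3, h2]
    ring
  -- the norm of φ
  set N := ∑ u ∈ L, m (insert u τ) * φ u ^ 2 with hN'
  have hN : 0 < N := by
    apply Finset.sum_pos' (fun u hu => mul_nonneg (le_of_lt (hpos1 u hu)) (sq_nonneg _))
    exact ⟨u₀, hu₀, mul_pos (hpos1 u₀ hu₀) (by positivity)⟩
  -- the localized functions
  set χ : V → V → ℝ := fun u v =>
    if v ∈ linkVerts X (insert u τ) then φ v - (1 - μ) * φ u else 0 with hχ
  have hχS : ∀ u, ∀ v ∈ linkVerts X (insert u τ), χ u v = φ v - (1 - μ) * φ u :=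
    fun u v hv => by rw [hχ]; simp only; rw [if_pos hv]
  -- apply the link bound for each u ∈ L
  set P : V → ℝ := fun u => ∑ v ∈ linkVerts X (insert u τ),
    m (insert v (insert u τ)) * χ u v ^ 2 with hP
  set Q : V → ℝ := fun u => ∑ v ∈ linkVerts X (insert u τ),
    m (insert v (insert u τ)) * (linkLap X m (insert u τ) (χ u) v * χ u v) with hQ
  have hbound : ∀ u ∈ L, lam * P u ≤ Q u ∧ Q u ≤ kap * P u := by
    intro u hu
    apply link_quad_bound hSC hm.1
      (hconn (insert u τ) (hmemX u hu) (by rw [hcard1 u hu]; omega))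
      (hLsum2 u hu) lam kap
      (hspec (insert u τ) (hmemX u hu) (hcard1 u hu))
      (χ u) (fun v hv => by rw [hχ]; simp only; rw [if_neg hv])
    -- mean zero
    have : ∑ v ∈ linkVerts X (insert u τ), m (insert v (insert u τ)) * χ u v
        = ∑ v ∈ linkVerts X (insert u τ), (m (insert v (insert u τ)) * φ v
            - (1 - μ) * φ u * m (insert v (insert u τ))) := by
      apply Finset.sum_congr rfl
      intro v hv
      rw [hχS u v hv]
      ring
    rw [this, Finset.sum_sub_distrib, ← Finset.mul_sum, heig' u hu, ← hLsum u hu]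
    ring
  -- Identity 1 : ∑ P = (1 - (1-μ)^2) N
  have hswap1 : ∑ u ∈ L, ∑ v ∈ linkVerts X (insert u τ),
        m (insert v (insert u τ)) * φ v ^ 2
      = ∑ u ∈ L, ∑ v ∈ linkVerts X (insert u τ),
          m (insert v (insert u τ)) * φ u ^ 2 := by
    rw [sum_link_swap hSC τ (fun u v => m (insert v (insert u τ)) * φ v ^ 2)]
    exact Finset.sum_congr rfl (fun u _ => Finset.sum_congr rfl (fun v _ => by
      rw [Finset.insert_comm]))
  have hPsum : ∑ u ∈ L, P u = N - (1 - μ) ^ 2 * N := by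
    have hPu : ∀ u ∈ L, P u = (∑ v ∈ linkVerts X (insert u τ),
        m (insert v (insert u τ)) * φ v ^ 2) - (1 - μ) ^ 2 * (m (insert u τ) * φ u ^ 2) := by
      intro u hu
      rw [hP]
      simp only
      have : ∀ v ∈ linkVerts X (insert u τ), m (insert v (insert u τ)) * χ u v ^ 2
          = m (insert v (insert u τ)) * φ v ^ 2
            - (2 * ((1 - μ) * φ u)) * (m (insert v (insert u τ)) * φ v)
            + ((1 - μ) * φ u) ^ 2 * m (insert v (insert u τ)) := by
        intro v hv
        rw [hχS u v hv]
        ring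
      rw [Finset.sum_congr rfl this, Finset.sum_add_distrib, Finset.sum_sub_distrib,
        ← Finset.mul_sum, ← Finset.mul_sum, heig' u hu, ← hLsum u hu]
      ring
    rw [Finset.sum_congr rfl hPu, Finset.sum_sub_distrib, hswap1]
    have : ∑ u ∈ L, ∑ v ∈ linkVerts X (insert u τ), m (insert v (insert u τ)) * φ u ^ 2
        = N := by
      rw [hN']
      apply Finset.sum_congr rfl
      intro u hu
      rw [← Finset.sum_mul, ← hLsum u hu]
    rw [this, ← Finset.mul_sum]
  -- Identity 2 : ∑ Q = ∑ P - ∑ TT + (1-μ)^2 N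
  set TT : V → ℝ := fun u => ∑ v ∈ linkVerts X (insert u τ),
    ∑ w ∈ linkVerts X (insert v (insert u τ)),
      m (insert w (insert v (insert u τ))) * (φ v * φ w) with hTT
  have hQu : ∀ u ∈ L, Q u = P u - (TT u - (1 - μ) ^ 2 * (m (insert u τ) * φ u ^ 2)) := by
    intro u hu
    have hlapx : ∀ v ∈ linkVerts X (insert u τ),
        m (insert v (insert u τ)) * (linkLap X m (insert u τ) (χ u) v * χ u v)
          = m (insert v (insert u τ)) * (χ u v * χ u v)
            - ∑ w ∈ linkVerts X (insert v (insert u τ)),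
                m (insert w (insert v (insert u τ))) * (χ u w * χ u v) :=
      fun v hv => lap_expand (χ u) (hpos2 u hu v hv)
    have hQ1 : Q u = P u - ∑ v ∈ linkVerts X (insert u τ),
        ∑ w ∈ linkVerts X (insert v (insert u τ)),
          m (insert w (insert v (insert u τ))) * (χ u w * χ u v) := by
      rw [hQ]
      simp only
      rw [Finset.sum_congr rfl hlapx, Finset.sum_sub_distrib]
      congr 1
      rw [hP]
      exact Finset.sum_congr rfl (fun v _ => by ring)
    -- expand the double sum
    have hRu : ∑ v ∈ linkVerts X (insert u τ), ∑ w ∈ linkVerts X (insert v (insert u τ)),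
          m (insert w (insert v (insert u τ))) * (χ u w * χ u v)
        = TT u - (1 - μ) ^ 2 * (m (insert u τ) * φ u ^ 2) := by
      have hexp : ∀ v ∈ linkVerts X (insert u τ), ∀ w ∈ linkVerts X (insert v (insert u τ)),
          m (insert w (insert v (insert u τ))) * (χ u w * χ u v)
            = m (insert w (insert v (insert u τ))) * (φ v * φ w)
              - ((1 - μ) * φ u) * (m (insert w (insert v (insert u τ))) * φ w)
              - ((1 - μ) * φ u) * (m (insert w (insert v (insert u τ))) * φ v)
              + ((1 - μ) * φ u) ^ 2 * m (insert w (insert v (insert u τ))) := by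
        intro v hv w hw
        have hwS : w ∈ linkVerts X (insert u τ) := (link_pair_symm hSC hv hw).1
        rw [hχS u v hv, hχS u w hwS]
        ring
      have step : ∑ v ∈ linkVerts X (insert u τ), ∑ w ∈ linkVerts X (insert v (insert u τ)),
            m (insert w (insert v (insert u τ))) * (χ u w * χ u v)
          = TT u
            - ((1 - μ) * φ u) * (∑ v ∈ linkVerts X (insert u τ),
                ∑ w ∈ linkVerts X (insert v (insert u τ)),
                  m (insert w (insert v (insert u τ))) * φ w)
            - ((1 - μ) * φ u) * (∑ v ∈ linkVerts X (insert u τ),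
                ∑ w ∈ linkVerts X (insert v (insert u τ)),
                  m (insert w (insert v (insert u τ))) * φ v)
            + ((1 - μ) * φ u) ^ 2 * (∑ v ∈ linkVerts X (insert u τ),
                ∑ w ∈ linkVerts X (insert v (insert u τ)),
                  m (insert w (insert v (insert u τ)))) := by
        rw [hTT]
        simp only
        rw [Finset.mul_sum, Finset.mul_sum, Finset.mul_sum, ← Finset.sum_sub_distrib,
          ← Finset.sum_sub_distrib, ← Finset.sum_add_distrib]
        apply Finset.sum_congr rfl
        intro v hv
        rw [Finset.mul_sum, Finset.mul_sum, Finset.mul_sum, ← Finset.sum_sub_distrib,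
          ← Finset.sum_sub_distrib, ← Finset.sum_add_distrib]
        exact Finset.sum_congr rfl (fun w hw => by rw [hexp v hv w hw])
      -- evaluate the three auxiliary double sums
      have haux1 : ∑ v ∈ linkVerts X (insert u τ), ∑ w ∈ linkVerts X (insert v (insert u τ)),
            m (insert w (insert v (insert u τ))) = m (insert u τ) := by
        rw [Finset.sum_congr rfl (fun v hv => (hLsum2 u hu v hv).symm), ← hLsum u hu]
      have haux2 : ∑ v ∈ linkVerts X (insert u τ), ∑ w ∈ linkVerts X (insert v (insert u τ)),
            m (insert w (insert v (insert u τ))) * φ v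
          = (1 - μ) * (m (insert u τ) * φ u) := by
        have : ∀ v ∈ linkVerts X (insert u τ), ∑ w ∈ linkVerts X (insert v (insert u τ)),
            m (insert w (insert v (insert u τ))) * φ v = m (insert v (insert u τ)) * φ v :=
          fun v hv => by rw [← Finset.sum_mul, ← hLsum2 u hu v hv]
        rw [Finset.sum_congr rfl this, heig' u hu]
      have haux3 : ∑ v ∈ linkVerts X (insert u τ), ∑ w ∈ linkVerts X (insert v (insert u τ)),
            m (insert w (insert v (insert u τ))) * φ w
          = (1 - μ) * (m (insert u τ) * φ u) := by
        rw [sum_link_swap hSC (insert u τ)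
          (fun v w => m (insert w (insert v (insert u τ))) * φ w), ← haux2]
        exact Finset.sum_congr rfl (fun v _ => Finset.sum_congr rfl (fun w _ => by
          rw [Finset.insert_comm]))
      rw [step, haux1, haux2, haux3]
      ring
    rw [hQ1, hRu]
  -- Identity 3 : ∑ TT = (1-μ) N
  have hTTsum : ∑ u ∈ L, TT u = (1 - μ) * N := by
    have hstepA : ∑ u ∈ L, TT u = ∑ u ∈ L, ∑ v ∈ linkVerts X (insert u τ),
        ∑ w ∈ linkVerts X (insert u (insert v τ)),
          m (insert w (insert u (insert v τ))) * (φ u * φ w) := by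
      rw [hTT]
      exact sum_link_swap hSC τ (fun u v => ∑ w ∈ linkVerts X (insert v (insert u τ)),
        m (insert w (insert v (insert u τ))) * (φ v * φ w))
    have hstepB : ∀ u ∈ L, ∑ v ∈ linkVerts X (insert u τ),
          ∑ w ∈ linkVerts X (insert u (insert v τ)),
            m (insert w (insert u (insert v τ))) * (φ u * φ w)
        = ∑ v ∈ linkVerts X (insert u τ), m (insert v (insert u τ)) * (φ u * φ v) := by
      intro u hu
      have hB1 : ∀ v ∈ linkVerts X (insert u τ),
          ∑ w ∈ linkVerts X (insert u (insert v τ)),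
            m (insert w (insert u (insert v τ))) * (φ u * φ w)
          = ∑ w ∈ linkVerts X (insert v (insert u τ)),
            m (insert w (insert v (insert u τ))) * (φ u * φ w) := by
        intro v hv
        rw [Finset.insert_comm u v τ]
      rw [Finset.sum_congr rfl hB1]
      rw [sum_link_swap hSC (insert u τ)
        (fun v w => m (insert w (insert v (insert u τ))) * (φ u * φ w))]
      have hB2 : ∀ v ∈ linkVerts X (insert u τ),
          ∑ w ∈ linkVerts X (insert v (insert u τ)),
            m (insert v (insert w (insert u τ))) * (φ u * φ v)
          = m (insert v (insert u τ)) * (φ u * φ v) := by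
        intro v hv
        rw [Finset.sum_congr rfl (fun w (hw : w ∈ linkVerts X (insert v (insert u τ))) => by
          rw [Finset.insert_comm v w (insert u τ)]), ← Finset.sum_mul,
          ← hLsum2 u hu v hv]
      exact Finset.sum_congr rfl hB2
    rw [hstepA, Finset.sum_congr rfl hstepB]
    have : ∀ u ∈ L, ∑ v ∈ linkVerts X (insert u τ),
        m (insert v (insert u τ)) * (φ u * φ v)
        = (1 - μ) * (m (insert u τ) * φ u ^ 2) := by
      intro u hu
      have : ∑ v ∈ linkVerts X (insert u τ), m (insert v (insert u τ)) * (φ u * φ v)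
          = φ u * ∑ v ∈ linkVerts X (insert u τ), m (insert v (insert u τ)) * φ v := by
        rw [Finset.mul_sum]
        exact Finset.sum_congr rfl (fun v _ => by ring)
      rw [this, heig' u hu]
      ring
    rw [Finset.sum_congr rfl this, ← Finset.mul_sum, hN']
  -- combine
  have hQsum : ∑ u ∈ L, Q u = μ * N := by
    rw [Finset.sum_congr rfl hQu, Finset.sum_sub_distrib, Finset.sum_sub_distrib, hPsum,
      hTTsum, ← Finset.mul_sum]
    rw [hN']
    ring
  have hPnn : 0 ≤ ∑ u ∈ L, P u := by
    apply Finset.sum_nonneg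
    intro u hu
    rw [hP]
    exact Finset.sum_nonneg (fun v hv => mul_nonneg (hpos2 u hu v hv).le (sq_nonneg _))
  have hineq1 : lam * ∑ u ∈ L, P u ≤ ∑ u ∈ L, Q u := by
    rw [Finset.mul_sum]
    exact Finset.sum_le_sum (fun u hu => (hbound u hu).1)
  have hineq2 : ∑ u ∈ L, Q u ≤ kap * ∑ u ∈ L, P u := by
    rw [Finset.mul_sum]
    exact Finset.sum_le_sum (fun u hu => (hbound u hu).2)
  rw [hQsum, hPsum] at hineq1 hineq2
  rw [hPsum] at hPnn
  have hμpos : 0 < μ := by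
    rcases lt_or_ge 0 μ with h | h
    · exact h
    · exfalso
      have h1 : 0 ≤ μ * N := le_trans (mul_nonneg hlam.le hPnn) hineq1
      have h2 : μ * N ≤ 0 := mul_nonpos_of_nonpos_of_nonneg h hN.le
      have hμ0 : μ * N = 0 := le_antisymm h2 h1
      exact hμ ((mul_eq_zero.mp hμ0).resolve_right (ne_of_gt hN))
  constructor
  · have h7 : lam * (2 - μ) ≤ 1 := by
      nlinarith [hineq1, mul_pos hμpos hN]
    have h9 : 2 - μ ≤ 1 / lam := (le_div_iff₀ hlam).mpr (by linarith)
    linarith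
  · have h7 : 1 ≤ kap * (2 - μ) := by
      nlinarith [hineq2, mul_pos hμpos hN]
    have h9 : 1 / kap ≤ 2 - μ := (div_le_iff₀ hkap).mpr (by linarith)
    linarith
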